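/- There exists M ∈ ℕ such that for all k ≥ M, φ̃(N_k) > k, where N_k is the product of the first k primes. (In fact one may take M = 4.) -/

import Mathlib

/-- φ̃(n): number of m with 1 ≤ m ≤ n, gcd(m,n)=1, m not prime. -/
def phiT (n : ℕ) : ℕ :=
  ((Finset.Icc 1 n).filter (fun m => Nat.gcd m n = 1 ∧ ¬ m.Prime)).card

/-- The product of the first k primes. -/
noncomputable def primorialN (k : ℕ) : ℕ := ∏ i ∈ Finset.range k, Nat.nth Nat.Prime i

open Nat Finset

lemma nth_prime_prime (n : ℕ) : (Nat.nth Nat.Prime n).Prime :=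
  Nat.nth_mem_of_infinite Nat.infinite_setOf_prime n

lemma nth_prime_succ_le_two_mul (n : ℕ) :
    Nat.nth Nat.Prime (n + 1) ≤ 2 * Nat.nth Nat.Prime n := by
  obtain ⟨q, hq, hlt, hle⟩ := Nat.exists_prime_lt_and_le_two_mul (Nat.nth Nat.Prime n)
    (nth_prime_prime n).pos.ne'
  by_contra h
  push_neg at h
  have := Nat.le_nth_of_lt_nth_succ (lt_of_le_of_lt hle h) hq
  omega

lemma nth_prime_le_two_pow (n : ℕ) : Nat.nth Nat.Prime n ≤ 2 ^ (n + 1) := by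
  induction n with
  | zero => simp
  | succ n ih =>
    calc Nat.nth Nat.Prime (n + 1) ≤ 2 * Nat.nth Nat.Prime n := nth_prime_succ_le_two_mul n
    _ ≤ 2 * 2 ^ (n + 1) := by omega
    _ = 2 ^ (n + 2) := by ring

lemma factorial_le_primorialN (k : ℕ) : (k + 1)! ≤ primorialN k := by
  induction k with
  | zero => simp [primorialN]
  | succ k ih =>
    rw [primorialN, Finset.prod_range_succ, ← primorialN]
    calc (k + 2)! = (k + 1)! * (k + 2) := by
          rw [Nat.factorial_succ]; ring
    _ ≤ primorialN k * Nat.nth Nat.Prime k :=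
        Nat.mul_le_mul ih (Nat.add_two_le_nth_prime k)

lemma pow_le_factorial' : ∀ k ≥ 20, 2 ^ (3 * k + 2) ≤ (k + 1)! := by
  intro k hk
  induction k with
  | zero => omega
  | succ k ih =>
    rcases Nat.lt_or_ge k 20 with h | h
    · interval_cases k <;> first | omega | norm_num [Nat.factorial]
    · have h1 := ih h
      have h2 : (k + 2)! = (k + 2) * (k + 1)! := Nat.factorial_succ _
      calc 2 ^ (3 * (k + 1) + 2) = 8 * 2 ^ (3 * k + 2) := by ring
      _ ≤ (k + 2) * (k + 1)! := Nat.mul_le_mul (by omega) h1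
      _ = (k + 2)! := h2.symm

lemma key_bound (k : ℕ) (hk : k ≥ 20) :
    Nat.nth Nat.Prime k * Nat.nth Nat.Prime (2 * k) ≤ primorialN k := by
  have h1 := nth_prime_le_two_pow k
  have h2 := nth_prime_le_two_pow (2 * k)
  calc Nat.nth Nat.Prime k * Nat.nth Nat.Prime (2 * k)
      ≤ 2 ^ (k + 1) * 2 ^ (2 * k + 1) := Nat.mul_le_mul h1 h2
  _ = 2 ^ (3 * k + 2) := by rw [← pow_add]; ring_nf
  _ ≤ (k + 1)! := pow_le_factorial' k hk
  _ ≤ primorialN k := factorial_le_primorialN k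

lemma coprime_nth_primorialN {m k : ℕ} (hm : k ≤ m) :
    Nat.Coprime (Nat.nth Nat.Prime m) (primorialN k) := by
  apply Nat.Coprime.prod_right
  intro i hi
  rw [Finset.mem_range] at hi
  exact (Nat.coprime_primes (nth_prime_prime m) (nth_prime_prime i)).mpr
    (fun h => by
      have := Nat.nth_injective Nat.infinite_setOf_prime h
      omega)

theorem stmt10 : ∃ M : ℕ, ∀ k ≥ M, phiT (primorialN k) > k := by
  refine ⟨20, fun k hk => ?_⟩
  have hNpos : 0 < primorialN k := by
    apply Finset.prod_pos
    intro i _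
    exact (nth_prime_prime i).pos
  set S := ((Finset.Icc 1 (primorialN k)).filter
    (fun m => Nat.gcd m (primorialN k) = 1 ∧ ¬ m.Prime)) with hS
  have hcard : k + 1 ≤ S.card := by
    have := Finset.card_le_card_of_injOn
      (f := fun j => Nat.nth Nat.Prime k * Nat.nth Nat.Prime (k + j))
      (s := Finset.range (k + 1)) (t := S)
      (fun j hj => by
        rw [Finset.mem_coe, Finset.mem_range] at hj
        have hp1 := nth_prime_prime k
        have hp2 := nth_prime_prime (k + j)
        rw [Finset.mem_coe, hS, Finset.mem_filter, Finset.mem_Icc]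
        refine ⟨⟨Nat.mul_pos hp1.pos hp2.pos, ?_⟩, ?_, ?_⟩
        · calc Nat.nth Nat.Prime k * Nat.nth Nat.Prime (k + j)
              ≤ Nat.nth Nat.Prime k * Nat.nth Nat.Prime (2 * k) := by
                apply Nat.mul_le_mul_left
                exact (Nat.nth_le_nth Nat.infinite_setOf_prime).mpr (by omega)
          _ ≤ primorialN k := key_bound k hk
        · exact (Nat.Coprime.mul (coprime_nth_primorialN le_rfl)
            (coprime_nth_primorialN (Nat.le_add_right k j)))
        · exact Nat.not_prime_mul hp1.one_lt.ne' hp2.one_lt.ne'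
      )
      (fun a _ b _ hab => by
        simp only at hab
        have := Nat.eq_of_mul_eq_mul_left (nth_prime_prime k).pos hab
        have := Nat.nth_injective Nat.infinite_setOf_prime this
        omega)
    simpa using this
  have : S.card = phiT (primorialN k) := rfl
  omega
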